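/- Let G be a nontrivial additive group and let (X_G, ρ) be the ℝ-tree of pairs (a, f), a > 0, f : ℝ → G with f = 0 on (−∞, a], f eventually 0, f piecewise constant from the left on (a, ∞), with metric ρ(p,q) = (c(p,q) − a) + (c(p,q) − b) where c(p,q) = max(a, b, inf{x : f = g on (x, ∞)}). Then for every point x ∈ X_G, the set of connected components of X_G \ {x} has the same cardinality as Option G (i.e., cardinality |G| + 1). -/

import Mathlib

/-- A point of the tree `X_G`: a pair `(a, f)` with `a > 0`, `f : ℝ → G` vanishing on
`(-∞, a]`, eventually zero, and piecewise constant from the left on `(a, ∞)`. -/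
structure TreePt (G : Type*) [AddGroup G] where
  a : ℝ
  f : ℝ → G
  a_pos : 0 < a
  f_zero : ∀ t : ℝ, t ≤ a → f t = 0
  f_ev : ∃ b : ℝ, ∀ t : ℝ, b ≤ t → f t = 0
  f_pcl : ∀ x : ℝ, a < x → ∃ ε > 0, ∀ s ∈ Set.Icc (x - ε) x ∩ Set.Ioi a, f s = f x

/-- `c(p,q) = max(a, b, inf {x | f = g on (x, ∞)})`. -/
noncomputable def cval {G : Type*} [AddGroup G] (p q : TreePt G) : ℝ :=
  max (max p.a q.a) (sInf {x : ℝ | ∀ t : ℝ, x < t → p.f t = q.f t})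

/-- The metric `ρ(p,q) = (c(p,q) - a) + (c(p,q) - b)` on `X_G`. -/
noncomputable def rho {G : Type*} [AddGroup G] (p q : TreePt G) : ℝ :=
  (cval p q - p.a) + (cval p q - q.a)

/-- The partial order: `(a,f) ⪯ (b,g)` iff `a ≤ b` and `f = g` on `(b, ∞)`. -/
def tle {G : Type*} [AddGroup G] (p q : TreePt G) : Prop :=
  p.a ≤ q.a ∧ ∀ t : ℝ, q.a < t → p.f t = q.f t

namespace Stmt14Aux

open Set

variable {G : Type*} [AddGroup G]

lemma TreePt.ext' {p q : TreePt G} (h1 : p.a = q.a) (h2 : p.f = q.f) : p = q := by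
  cases p; cases q; cases h1; cases h2; rfl

lemma le_cval_left (p q : TreePt G) : p.a ≤ cval p q :=
  le_max_of_le_left (le_max_left _ _)

lemma le_cval_right (p q : TreePt G) : q.a ≤ cval p q :=
  le_max_of_le_left (le_max_right _ _)

lemma agree_of_cval_lt (p q : TreePt G) {t : ℝ} (ht : cval p q < t) : p.f t = q.f t := by
  set A : Set ℝ := {x : ℝ | ∀ t : ℝ, x < t → p.f t = q.f t} with hA
  by_cases hbd : BddBelow A
  · have hAne : A.Nonempty := by
      obtain ⟨b1, hb1⟩ := p.f_ev
      obtain ⟨b2, hb2⟩ := q.f_ev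
      refine ⟨max b1 b2, fun u hu => ?_⟩
      rw [hb1 u (le_of_lt (lt_of_le_of_lt (le_max_left _ _) hu)),
        hb2 u (le_of_lt (lt_of_le_of_lt (le_max_right _ _) hu))]
    have h1 : sInf A < t := lt_of_le_of_lt (le_max_right _ _ : sInf A ≤ cval p q) ht
    obtain ⟨w, hwA, hwt⟩ := exists_lt_of_csInf_lt hAne h1
    exact hwA t hwt
  · rw [not_bddBelow_iff] at hbd
    obtain ⟨w, hwA, hwt⟩ := hbd t
    exact hwA t hwt

lemma cval_eq_of_agree (p q : TreePt G)
    (h : ∀ t, max p.a q.a < t → p.f t = q.f t) :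
    cval p q = max p.a q.a := by
  apply max_eq_left
  by_cases hbd : BddBelow {x : ℝ | ∀ t : ℝ, x < t → p.f t = q.f t}
  · exact csInf_le hbd h
  · rw [Real.sInf_of_not_bddBelow hbd]
    exact le_trans p.a_pos.le (le_max_left _ _)

lemma rho_eq_of_agree (p q : TreePt G)
    (h : ∀ t, max p.a q.a < t → p.f t = q.f t) :
    rho p q = |p.a - q.a| := by
  rw [rho, cval_eq_of_agree p q h]
  rcases le_total p.a q.a with hle | hle
  · rw [max_eq_right hle, abs_of_nonpos (by linarith)]; ring
  · rw [max_eq_left hle, abs_of_nonneg (by linarith)]; ring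

noncomputable def trunc (y : TreePt G) (s : ℝ) : TreePt G where
  a := max y.a s
  f := fun t => if max y.a s < t then y.f t else 0
  a_pos := lt_of_lt_of_le y.a_pos (le_max_left _ _)
  f_zero := fun t ht => if_neg (not_lt.2 ht)
  f_ev := by
    obtain ⟨b, hb⟩ := y.f_ev
    refine ⟨b, fun t ht => ?_⟩
    by_cases h : max y.a s < t
    · rw [if_pos h]; exact hb t ht
    · rw [if_neg h]
  f_pcl := by
    intro w hw
    obtain ⟨ε, hε, hcon⟩ := y.f_pcl w (lt_of_le_of_lt (le_max_left _ _) hw)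
    refine ⟨ε, hε, fun u hu => ?_⟩
    obtain ⟨⟨hu1, hu2⟩, hu3⟩ := hu
    rw [if_pos (show max y.a s < u from hu3), if_pos hw]
    exact hcon u ⟨⟨hu1, hu2⟩, (show y.a < u from lt_of_le_of_lt (le_max_left y.a s) hu3)⟩

@[simp] lemma trunc_a (y : TreePt G) (s : ℝ) : (trunc y s).a = max y.a s := rfl

lemma trunc_f (y : TreePt G) (s t : ℝ) :
    (trunc y s).f t = if max y.a s < t then y.f t else 0 := rfl

lemma trunc_f_of_lt (y : TreePt G) {s t : ℝ} (h : max y.a s < t) :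
    (trunc y s).f t = y.f t := if_pos h

lemma trunc_self (y : TreePt G) : trunc y y.a = y := by
  refine TreePt.ext' (by simp) (funext fun t => ?_)
  rw [trunc_f, max_self]
  by_cases h : y.a < t
  · rw [if_pos h]
  · rw [if_neg h, y.f_zero t (not_lt.1 h)]

lemma trunc_trunc (y : TreePt G) (u s : ℝ) :
    trunc (trunc y u) s = trunc y (max u s) := by
  have hmax : max (max y.a u) s = max y.a (max u s) := max_assoc _ _ _
  refine TreePt.ext' (by simp [hmax]) (funext fun t => ?_)
  simp only [trunc_f, trunc_a, hmax]
  by_cases h : max y.a (max u s) < t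
  · have h1 : max y.a u ≤ max y.a (max u s) := max_le_max le_rfl (le_max_left _ _)
    rw [if_pos h, if_pos h, if_pos (lt_of_le_of_lt h1 h)]
  · rw [if_neg h, if_neg h]

lemma trunc_congr {y z : TreePt G} {m : ℝ} (hy : y.a ≤ m) (hz : z.a ≤ m)
    (h : ∀ t, m < t → y.f t = z.f t) : trunc y m = trunc z m := by
  refine TreePt.ext' (by simp [max_eq_right hy, max_eq_right hz]) (funext fun t => ?_)
  rw [trunc_f, trunc_f, max_eq_right hy, max_eq_right hz]
  by_cases ht : m < t
  · rw [if_pos ht, if_pos ht, h t ht]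
  · rw [if_neg ht, if_neg ht]

lemma rho_trunc_trunc (y : TreePt G) (u v : ℝ) :
    rho (trunc y u) (trunc y v) = |max y.a u - max y.a v| := by
  have hag : ∀ t, max (trunc y u).a (trunc y v).a < t → (trunc y u).f t = (trunc y v).f t := by
    intro t ht
    simp only [trunc_a] at ht
    rw [trunc_f_of_lt y (lt_of_le_of_lt (le_max_left _ _) ht),
      trunc_f_of_lt y (lt_of_le_of_lt (le_max_right _ _) ht)]
  rw [rho_eq_of_agree _ _ hag, trunc_a, trunc_a]

noncomputable def sidePt (x : TreePt G) (g : G) : TreePt G where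
  a := x.a / 2
  f := fun t => if x.a < t then x.f t else if x.a / 2 < t then g else 0
  a_pos := half_pos x.a_pos
  f_zero := fun t ht => by
    rw [if_neg (not_lt.2 (ht.trans (half_le_self x.a_pos.le))), if_neg (not_lt.2 ht)]
  f_ev := by
    obtain ⟨b, hb⟩ := x.f_ev
    refine ⟨max b x.a + 1, fun t ht => ?_⟩
    have h1 : x.a < t := by
      have := le_max_right b x.a; linarith
    have h2 : b ≤ t := by
      have := le_max_left b x.a; linarith
    rw [if_pos h1]
    exact hb t h2
  f_pcl := by
    intro w hw
    by_cases hwa : x.a < w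
    · obtain ⟨ε, hε, hcon⟩ := x.f_pcl w hwa
      refine ⟨min ε ((w - x.a) / 2), lt_min hε (by linarith), fun u hu => ?_⟩
      obtain ⟨⟨hu1, hu2⟩, _⟩ := hu
      have hm1 : min ε ((w - x.a) / 2) ≤ ε := min_le_left _ _
      have hm2 : min ε ((w - x.a) / 2) ≤ (w - x.a) / 2 := min_le_right _ _
      have hua : x.a < u := by linarith
      rw [if_pos hua, if_pos hwa]
      exact hcon u ⟨⟨by linarith, hu2⟩, hua⟩
    · refine ⟨1, one_pos, fun u hu => ?_⟩
      obtain ⟨⟨_, hu2⟩, hu3⟩ := hu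
      have hu3' : x.a / 2 < u := hu3
      have hu4 : ¬ x.a < u := not_lt.2 (hu2.trans (not_lt.1 hwa))
      rw [if_neg hu4, if_pos hu3', if_neg hwa, if_pos hw]

lemma sidePt_a (x : TreePt G) (g : G) : (sidePt x g).a = x.a / 2 := rfl

lemma sidePt_f_of_gt (x : TreePt G) (g : G) {t : ℝ} (h : x.a < t) :
    (sidePt x g).f t = x.f t := if_pos h

lemma sidePt_f_mid (x : TreePt G) (g : G) {t : ℝ} (h1 : x.a / 2 < t) (h2 : t ≤ x.a) :
    (sidePt x g).f t = g := by
  show (if x.a < t then x.f t else if x.a / 2 < t then g else 0) = g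
  rw [if_neg (not_lt.2 h2), if_pos h1]

lemma tle_sidePt (x : TreePt G) (g : G) : tle (sidePt x g) x :=
  ⟨half_le_self x.a_pos.le, fun t ht => sidePt_f_of_gt x g ht⟩

lemma tle_refl (x : TreePt G) : tle x x := ⟨le_rfl, fun _ _ => rfl⟩

lemma tle_trans {p q r : TreePt G} (h1 : tle p q) (h2 : tle q r) : tle p r :=
  ⟨h1.1.trans h2.1, fun t ht => (h1.2 t (lt_of_le_of_lt h2.1 ht)).trans (h2.2 t ht)⟩

lemma eq_of_tle_of_a_eq {p q : TreePt G} (h : tle p q) (ha : p.a = q.a) : p = q := by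
  refine TreePt.ext' ha (funext fun t => ?_)
  by_cases ht : q.a < t
  · exact h.2 t ht
  · rw [q.f_zero t (not_lt.1 ht), p.f_zero t (ha ▸ not_lt.1 ht)]


variable [MetricSpace (TreePt G)]

lemma lip_trunc (hdist : ∀ p q : TreePt G, dist p q = rho p q) (y : TreePt G) :
    LipschitzWith 1 (trunc y) := by
  apply LipschitzWith.of_dist_le_mul
  intro u v
  rw [hdist, rho_trunc_trunc, Real.dist_eq, NNReal.coe_one, one_mul]
  rw [max_comm y.a u, max_comm y.a v]
  exact abs_max_sub_max_le_abs _ _ _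

lemma joinedIn_vert (hdist : ∀ p q : TreePt G, dist p q = rho p q)
    (T : Set (TreePt G)) (y : TreePt G) (m : ℝ) (hm : y.a ≤ m)
    (hT : ∀ s, y.a ≤ s → s ≤ m → trunc y s ∈ T) : JoinedIn T y (trunc y m) := by
  have hcont : Continuous fun t : unitInterval => trunc y (y.a + t * (m - y.a)) := by
    apply (lip_trunc hdist y).continuous.comp
    exact continuous_const.add (continuous_subtype_val.mul continuous_const)
  refine ⟨⟨⟨fun t => trunc y (y.a + t * (m - y.a)), hcont⟩, ?_, ?_⟩, fun t => ?_⟩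
  · show trunc y (y.a + ((0 : unitInterval) : ℝ) * (m - y.a)) = y
    norm_num [trunc_self]
  · show trunc y (y.a + ((1 : unitInterval) : ℝ) * (m - y.a)) = trunc y m
    norm_num
  · show trunc y (y.a + (t : ℝ) * (m - y.a)) ∈ T
    have h0 := t.2.1
    have h1 := t.2.2
    apply hT
    · nlinarith
    · nlinarith

end Stmt14Aux
namespace Stmt14Aux

variable {G : Type*} [AddGroup G]

def Tn (x : TreePt G) : Set (TreePt G) := {y | ¬ tle y x}

def Ts (x : TreePt G) (g : G) : Set (TreePt G) :=
  {y | tle y x ∧ y.a < x.a ∧ y.f x.a = g}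

def Tc (x : TreePt G) : Option G → Set (TreePt G) := fun o => o.elim (Tn x) (Ts x)

lemma mem_Tc (x : TreePt G) {y : TreePt G} (hy : y ≠ x) : ∃ o, y ∈ Tc x o := by
  by_cases h : tle y x
  · exact ⟨some (y.f x.a), h, lt_of_le_of_ne h.1 fun e => hy (eq_of_tle_of_a_eq h e), rfl⟩
  · exact ⟨none, h⟩

lemma Tc_disjoint (x : TreePt G) {o1 o2 : Option G} {y : TreePt G}
    (h1 : y ∈ Tc x o1) (h2 : y ∈ Tc x o2) : o1 = o2 := by
  match o1, o2 with
  | none, none => rfl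
  | none, some g => exact absurd h2.1 h1
  | some g, none => exact absurd h1.1 h2
  | some g, some g' =>
    obtain ⟨-, -, hg⟩ := h1; obtain ⟨-, -, hg'⟩ := h2
    rw [← hg, ← hg']

lemma Tc_ne (x : TreePt G) {o : Option G} {y : TreePt G} (hy : y ∈ Tc x o) : y ≠ x := by
  match o with
  | none => exact fun he => hy (he ▸ tle_refl x)
  | some g => exact fun he => absurd (he ▸ hy.2.1) (lt_irrefl x.a)

variable [MetricSpace (TreePt G)] (hdist : ∀ p q : TreePt G, dist p q = rho p q)

include hdist

lemma isOpen_Ts (x : TreePt G) (g : G) : IsOpen (Ts x g) := by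
  rw [Metric.isOpen_iff]
  rintro y ⟨hyt, hya, hyg⟩
  refine ⟨x.a - y.a, by linarith, fun z hz => ?_⟩
  rw [Metric.mem_ball, hdist] at hz
  have hc1 := le_cval_left z y
  have hc2 := le_cval_right z y
  have hcx : cval z y < x.a := by unfold rho at hz; linarith
  have hagree : ∀ t, x.a ≤ t → z.f t = y.f t := fun t ht =>
    agree_of_cval_lt z y (lt_of_lt_of_le hcx ht)
  refine ⟨⟨(hc1.trans_lt hcx).le, fun t ht => ?_⟩, lt_of_le_of_lt hc1 hcx, ?_⟩
  · rw [hagree t ht.le, hyt.2 t ht]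
  · rw [hagree x.a le_rfl, hyg]

lemma isOpen_Tn (x : TreePt G) : IsOpen (Tn x) := by
  rw [Metric.isOpen_iff]
  intro y hy
  by_cases hya : x.a < y.a
  · refine ⟨y.a - x.a, by linarith, fun z hz => ?_⟩
    rw [Metric.mem_ball, hdist] at hz
    have hc1 := le_cval_left z y
    have hc2 := le_cval_right z y
    exact fun hzx => absurd hzx.1 (not_le.2 (by unfold rho at hz; linarith))
  · push_neg at hya
    have hex : ∃ t, x.a < t ∧ y.f t ≠ x.f t := by
      by_contra hcon
      push_neg at hcon
      exact hy ⟨hya, fun t ht => hcon t ht⟩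
    obtain ⟨t0, ht0, hne0⟩ := hex
    refine ⟨t0 - y.a, by linarith, fun z hz => ?_⟩
    rw [Metric.mem_ball, hdist] at hz
    have hc1 := le_cval_left z y
    have hc2 := le_cval_right z y
    have hct : cval z y < t0 := by unfold rho at hz; linarith
    exact fun hzx => hne0 (by rw [← agree_of_cval_lt z y hct, hzx.2 t0 ht0])

omit hdist in
lemma sidePt_mem (x : TreePt G) (g : G) : sidePt x g ∈ Ts x g :=
  ⟨tle_sidePt x g, half_lt_self x.a_pos,
    sidePt_f_mid x g (half_lt_self x.a_pos) le_rfl⟩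

omit hdist in
lemma upPt_mem (x : TreePt G) : trunc x (x.a + 1) ∈ Tn x := by
  intro h
  have h1 := h.1
  rw [trunc_a] at h1
  have := le_max_right x.a (x.a + 1)
  have := le_trans this h1
  linarith

lemma isPathConnected_Ts (x : TreePt G) (g : G) : IsPathConnected (Ts x g) := by
  refine ⟨sidePt x g, sidePt_mem x g, ?_⟩
  rintro y ⟨hyt, hya, hyg⟩
  obtain ⟨ε, hε, hcon⟩ := y.f_pcl x.a hya
  set m0 : ℝ := max (max y.a (x.a / 2)) (x.a - ε) with hm0def
  have hm0lt : m0 < x.a := max_lt (max_lt hya (half_lt_self x.a_pos)) (by linarith)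
  set m : ℝ := (m0 + x.a) / 2 with hmdef
  have hm0m : m0 ≤ m := by rw [hmdef]; linarith
  have hmlt : m < x.a := by rw [hmdef]; linarith
  have hym : y.a ≤ m := le_trans (le_trans (le_max_left _ _) (le_max_left _ _)) hm0m
  have hsm : x.a / 2 ≤ m := le_trans (le_trans (le_max_right _ _) (le_max_left _ _)) hm0m
  have hεm : x.a - ε ≤ m := le_trans (le_max_right _ _) hm0m
  have hagree_mid : ∀ t, m < t → y.f t = (sidePt x g).f t := by
    intro t ht
    by_cases htx : x.a < t
    · rw [hyt.2 t htx, sidePt_f_of_gt x g htx]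
    · push_neg at htx
      have h1 : y.f t = g := by
        rw [hcon t ⟨⟨by linarith, htx⟩, lt_of_le_of_lt hym ht⟩, hyg]
      rw [h1, sidePt_f_mid x g (lt_of_le_of_lt hsm ht) htx]
  have hkey : trunc y m = trunc (sidePt x g) m :=
    trunc_congr hym hsm hagree_mid
  have hJ1 : JoinedIn (Ts x g) (sidePt x g) (trunc (sidePt x g) m) := by
    apply joinedIn_vert hdist _ _ _ hsm
    intro s hs1 hs2
    have hsx : max (sidePt x g).a s ≤ m := max_le hsm hs2
    refine ⟨⟨?_, fun t ht => ?_⟩, ?_, ?_⟩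
    · exact le_trans hsx hmlt.le
    · rw [trunc_f_of_lt _ (lt_of_le_of_lt (hsx.trans hmlt.le) ht), sidePt_f_of_gt x g ht]
    · exact lt_of_le_of_lt hsx hmlt
    · rw [trunc_f_of_lt _ (lt_of_le_of_lt hsx hmlt),
        sidePt_f_mid x g (half_lt_self x.a_pos) le_rfl]
  have hJ2 : JoinedIn (Ts x g) y (trunc y m) := by
    apply joinedIn_vert hdist _ _ _ hym
    intro s hs1 hs2
    have hsx : max y.a s ≤ m := max_le hym hs2
    refine ⟨⟨?_, fun t ht => ?_⟩, ?_, ?_⟩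
    · exact le_trans hsx hmlt.le
    · rw [trunc_f_of_lt _ (lt_of_le_of_lt (hsx.trans hmlt.le) ht)]
      exact hyt.2 t ht
    · exact lt_of_le_of_lt hsx hmlt
    · rw [trunc_f_of_lt _ (lt_of_le_of_lt hsx hmlt)]
      exact hyg
  exact hJ1.trans (hkey ▸ hJ2).symm

lemma isPathConnected_Tn (x : TreePt G) : IsPathConnected (Tn x) := by
  refine ⟨trunc x (x.a + 1), upPt_mem x, ?_⟩
  intro y hy
  obtain ⟨by', hby⟩ := y.f_ev
  obtain ⟨bx, hbx⟩ := x.f_ev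
  set M : ℝ := max (max y.a x.a) (max by' bx) + 1 with hMdef
  have hMy : y.a ≤ M := by
    have := le_max_left y.a x.a
    have := le_max_left (max y.a x.a) (max by' bx); linarith
  have hMx : x.a + 1 ≤ M := by
    have := le_max_right y.a x.a
    have := le_max_left (max y.a x.a) (max by' bx); linarith
  have hMby : by' ≤ M := by
    have := le_max_left by' bx
    have := le_max_right (max y.a x.a) (max by' bx); linarith
  have hMbx : bx ≤ M := by
    have := le_max_right by' bx
    have := le_max_right (max y.a x.a) (max by' bx); linarith
  have hkey : trunc y M = trunc x M :=
    trunc_congr hMy (by linarith) fun t ht => by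
      rw [hby t (by linarith), hbx t (by linarith)]
  have hJ1 : JoinedIn (Tn x) (trunc x (x.a + 1)) (trunc x M) := by
    have hva : (trunc x (x.a + 1)).a ≤ M := by
      rw [trunc_a, max_eq_right (by linarith)]; linarith
    have hv := joinedIn_vert hdist (Tn x) (trunc x (x.a + 1)) M hva ?_
    · rwa [trunc_trunc, max_eq_right (by linarith : x.a + 1 ≤ M)] at hv
    · intro s hs1 hs2
      intro hcont
      have h1 := hcont.1
      rw [trunc_a] at h1
      have h3 : x.a + 1 ≤ (trunc x (x.a + 1)).a := by
        rw [trunc_a]; exact le_max_right _ _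
      have h4 := le_max_left (trunc x (x.a + 1)).a s
      linarith
  have hJ2 : JoinedIn (Tn x) y (trunc y M) := by
    apply joinedIn_vert hdist _ _ _ hMy
    intro s hs1 hs2
    intro hcont
    apply hy
    refine ⟨le_trans (le_max_left y.a s) hcont.1, fun t ht => ?_⟩
    have h1 : max y.a s < t := lt_of_le_of_lt hcont.1 ht
    rw [← trunc_f_of_lt y h1]
    exact hcont.2 t ht
  exact hJ1.trans (hkey ▸ hJ2).symm

lemma isPathConnected_Tc (x : TreePt G) (o : Option G) : IsPathConnected (Tc x o) := by
  match o with
  | none => exact isPathConnected_Tn hdist x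
  | some g => exact isPathConnected_Ts hdist x g

lemma isOpen_Tc (x : TreePt G) (o : Option G) : IsOpen (Tc x o) := by
  match o with
  | none => exact isOpen_Tn hdist x
  | some g => exact isOpen_Ts hdist x g

end Stmt14Aux

open Stmt14Aux

/-- Every point of the ℝ-tree `X_G` is a branching point of valency `|G| + 1`:
the connected components of `X_G \ {x}` (for the topology of the metric `ρ`)
are in bijection with `Option G`. -/
theorem stmt14 {G : Type*} [AddGroup G] [Nontrivial G] [MetricSpace (TreePt G)]
    (hdist : ∀ p q : TreePt G, dist p q = rho p q) (x : TreePt G) :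
    Nonempty (ConnectedComponents {y : TreePt G // y ≠ x} ≃ Option G) := by
  classical
  let S : Option G → Set {y : TreePt G // y ≠ x} := fun o => Subtype.val ⁻¹' (Tc x o)
  have hSopen : ∀ o, IsOpen (S o) := fun o =>
    (isOpen_Tc hdist x o).preimage continuous_subtype_val
  have himage : ∀ o, Subtype.val '' (S o) = Tc x o := by
    intro o; ext y
    constructor
    · rintro ⟨z, hz, rfl⟩; exact hz
    · intro hy; exact ⟨⟨y, Tc_ne x hy⟩, hy, rfl⟩
  have hSconn : ∀ o, IsPreconnected (S o) := by
    intro o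
    have hpc := ((isPathConnected_Tc hdist x o).isConnected).isPreconnected
    rw [← himage o] at hpc
    exact Topology.IsInducing.subtypeVal.isPreconnected_image.mp hpc
  have hmemS : ∀ y : {y : TreePt G // y ≠ x}, ∃ o, y ∈ S o := fun y => mem_Tc x y.2
  have hSclosed : ∀ o, IsClosed (S o) := by
    intro o
    have hcompl : (S o)ᶜ = ⋃ o' ∈ {o' : Option G | o' ≠ o}, S o' := by
      ext y
      simp only [Set.mem_compl_iff, Set.mem_iUnion, Set.mem_setOf_eq, exists_prop]
      constructor
      · intro hy
        obtain ⟨o', ho'⟩ := hmemS y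
        exact ⟨o', fun he => hy (he ▸ ho'), ho'⟩
      · rintro ⟨o', hne, hyo'⟩ hyo
        exact hne (Tc_disjoint x hyo' hyo)
    rw [← isOpen_compl_iff, hcompl]
    exact isOpen_biUnion fun o' _ => hSopen o'
  have hSclopen : ∀ o, IsClopen (S o) := fun o => ⟨hSclosed o, hSopen o⟩
  let e : Option G → {y : TreePt G // y ≠ x} := fun o =>
    o.elim ⟨trunc x (x.a + 1), Tc_ne (o := none) x (upPt_mem x)⟩
      (fun g => ⟨sidePt x g, Tc_ne (o := some g) x (sidePt_mem x g)⟩)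
  have heS : ∀ o, e o ∈ S o := by
    intro o
    match o with
    | none => exact upPt_mem x
    | some g => exact sidePt_mem x g
  refine ⟨(Equiv.ofBijective
    (fun o : Option G => (ConnectedComponents.mk (e o))) ⟨?_, ?_⟩).symm⟩
  · intro o1 o2 h
    rw [ConnectedComponents.coe_eq_coe] at h
    have h1 : e o2 ∈ connectedComponent (e o1) := h ▸ mem_connectedComponent
    have h2 : e o2 ∈ S o1 := (hSclopen o1).connectedComponent_subset (heS o1) h1
    exact Tc_disjoint x h2 (heS o2)
  · intro c
    obtain ⟨y, rfl⟩ := ConnectedComponents.surjective_coe c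
    obtain ⟨o, ho⟩ := hmemS y
    refine ⟨o, ?_⟩
    rw [ConnectedComponents.coe_eq_coe]
    exact connectedComponent_eq ((hSconn o).subset_connectedComponent (heS o) ho)
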